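/- Let A be a C*-algebra, x ∈ A with ‖x x* x − x‖ < δ (δ small), y = x·f(x*x) as above. Then y − x lies in the closed two-sided ideal of C*(x) generated by x x* x − x, and ‖y − x‖ → 0 as ‖x x* x − x‖ → 0; more precisely ‖y − x‖ is bounded by a universal function of ‖x x* x − x‖ tending to 0 at 0. -/

import Mathlib

/-- The function `f(t) = t^{-1/2} · χ_{(1/2,∞)}(t)`. -/
noncomputable def spielbergF : ℝ → ℝ := fun t => if 1/2 < t then (Real.sqrt t)⁻¹ else 0

/-- The auxiliary function `h` with `f(t) - 1 = (t - 1) * h(t)` away from `1/2`. -/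
noncomputable def spielbergH : ℝ → ℝ := fun t =>
  if 1/2 < t then -((Real.sqrt t) * (1 + Real.sqrt t))⁻¹ else (1 - t)⁻¹

lemma spielberg_contF {t : ℝ} (ht : t < 1/4 ∨ 2/3 < t) : ContinuousAt spielbergF t := by
  rcases ht with h | h
  · refine (continuousAt_const (y := (0:ℝ))).congr ?_
    filter_upwards [Iio_mem_nhds (show t < 1/2 by linarith)] with u (hu : u < 1/2)
    simp only [spielbergF]
    rw [if_neg (not_lt.2 hu.le)]
  · have hc : ContinuousAt (fun u => (Real.sqrt u)⁻¹) t := by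
      have : Real.sqrt t ≠ 0 := by positivity
      fun_prop (disch := assumption)
    refine hc.congr ?_
    filter_upwards [Ioi_mem_nhds (show (1/2:ℝ) < t by linarith)] with u (hu : 1/2 < u)
    simp only [spielbergF]
    rw [if_pos hu]

lemma spielberg_contH {t : ℝ} (ht : t < 1/4 ∨ 2/3 < t) : ContinuousAt spielbergH t := by
  rcases ht with h | h
  · have hc : ContinuousAt (fun u : ℝ => (1 - u)⁻¹) t := by
      have : (1 : ℝ) - t ≠ 0 := by intro hh; linarith
      fun_prop (disch := assumption)
    refine hc.congr ?_
    filter_upwards [Iio_mem_nhds (show t < 1/2 by linarith)] with u (hu : u < 1/2)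
    simp only [spielbergH]
    rw [if_neg (not_lt.2 hu.le)]
  · have hc : ContinuousAt (fun u : ℝ => -((Real.sqrt u) * (1 + Real.sqrt u))⁻¹) t := by
      have h0 : Real.sqrt t ≠ 0 := by positivity
      have h1 : Real.sqrt t * (1 + Real.sqrt t) ≠ 0 := by positivity
      fun_prop (disch := assumption)
    refine hc.congr ?_
    filter_upwards [Ioi_mem_nhds (show (1/2:ℝ) < t by linarith)] with u (hu : 1/2 < u)
    simp only [spielbergH]
    rw [if_pos hu]

lemma spielberg_keyId {t : ℝ} (ht : t < 1/4 ∨ 2/3 < t) :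
    spielbergF t - 1 = (t - 1) * spielbergH t := by
  rcases ht with h | h
  · have h1 : ¬ (1/2 : ℝ) < t := by linarith
    simp only [spielbergF, spielbergH, if_neg h1]
    have : (1 : ℝ) - t ≠ 0 := by intro hh; linarith
    field_simp
    ring
  · have h1 : (1/2 : ℝ) < t := by linarith
    simp only [spielbergF, spielbergH, if_pos h1]
    have ht0 : (0:ℝ) ≤ t := by linarith
    have hs : Real.sqrt t ^ 2 = t := Real.sq_sqrt ht0
    have hs0 : Real.sqrt t ≠ 0 := by positivity
    have hs1 : (1 : ℝ) + Real.sqrt t ≠ 0 := by positivity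
    field_simp
    linear_combination (-1 : ℝ) * hs

lemma spielberg_boundH {t : ℝ} (ht : t < 1/4 ∨ 2/3 < t) : |spielbergH t| ≤ 2 := by
  rcases ht with h | h
  · have h1 : ¬ (1/2 : ℝ) < t := by linarith
    simp only [spielbergH, if_neg h1]
    rw [abs_of_pos (inv_pos.2 (by linarith)), inv_le_comm₀ (by linarith) (by norm_num)]
    linarith
  · have h1 : (1/2 : ℝ) < t := by linarith
    simp only [spielbergH, if_pos h1]
    have ht0 : (0:ℝ) ≤ t := by linarith
    have hs : Real.sqrt t ^ 2 = t := Real.sq_sqrt ht0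
    have hsn : (0:ℝ) ≤ Real.sqrt t := Real.sqrt_nonneg t
    have hp : (0:ℝ) < Real.sqrt t * (1 + Real.sqrt t) := by nlinarith
    rw [abs_neg, abs_of_pos (inv_pos.2 hp), inv_le_comm₀ hp (by norm_num)]
    nlinarith

lemma spielberg_dich {t δ : ℝ} (hδ : 0 ≤ δ) (hδ4 : δ < 1/4) (ht : |t * (t-1)^2| ≤ δ^2) :
    t < 1/4 ∨ 2/3 < t := by
  by_contra hcon
  push_neg at hcon
  obtain ⟨h1, h2⟩ := hcon
  have hd2 : δ^2 < 1/16 := by nlinarith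
  rw [abs_le] at ht
  nlinarith [ht.2, sq_nonneg (t - 1/3)]

lemma cfc_complex_mem_elemental {A : Type*} [CStarAlgebra A] (a : A) (g : ℂ → ℂ) :
    cfc g a ∈ StarAlgebra.elemental ℂ a := by
  apply cfc_cases (· ∈ StarAlgebra.elemental ℂ a)
  · exact zero_mem _
  · intro hg ha
    rw [cfcHom_eq_of_isStarNormal]
    exact SetLike.coe_mem _

lemma cfc_real_mem_elemental {A : Type*} [CStarAlgebra A] (a : A) (f : ℝ → ℝ)
    (ha : IsSelfAdjoint a) : cfc f a ∈ StarAlgebra.elemental ℂ a := by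
  rw [cfc_real_eq_complex f ha]
  exact cfc_complex_mem_elemental a _

set_option maxHeartbeats 1600000 in
/-- Lemma 3.2 (iii) and (iv): `y − x` lies in the closed two-sided ideal of `C*(x)`
generated by `x x* x − x`, and `‖y − x‖` is bounded by a universal function of
`‖x x* x − x‖` tending to `0` at `0`. -/
theorem stmt_2 :
    ∃ g : ℝ → ℝ, Filter.Tendsto g (nhdsWithin 0 (Set.Ici 0)) (nhds 0) ∧
      ∀ (A : Type) [CStarAlgebra A], ∀ (x : A)
        (hx : x ∈ StarAlgebra.elemental ℂ x)
        (hd : x * star x * x - x ∈ StarAlgebra.elemental ℂ x)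
        (hy : x * cfc spielbergF (star x * x) ∈ StarAlgebra.elemental ℂ x),
        ‖x * star x * x - x‖ < 1 / 4 →
        ((⟨x * cfc spielbergF (star x * x), hy⟩ - ⟨x, hx⟩ : StarAlgebra.elemental ℂ x) ∈
          closure ((TwoSidedIdeal.span {(⟨x * star x * x - x, hd⟩ : StarAlgebra.elemental ℂ x)} :
            TwoSidedIdeal (StarAlgebra.elemental ℂ x)) : Set (StarAlgebra.elemental ℂ x))) ∧
        ‖x * cfc spielbergF (star x * x) - x‖ ≤ g ‖x * star x * x - x‖ := by
  refine ⟨fun s => 2*s, ?_, ?_⟩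
  · have h0 : Filter.Tendsto (fun s : ℝ => 2*s) (nhds 0) (nhds 0) := by
      simpa using (continuous_mul_left (2:ℝ)).tendsto (0:ℝ)
    exact h0.mono_left nhdsWithin_le_nhds
  · intro A _ x hx hd hy hδ4
    have ha : IsSelfAdjoint (star x * x) := IsSelfAdjoint.star_mul_self x
    have hδ0 : (0:ℝ) ≤ ‖x * star x * x - x‖ := norm_nonneg _
    have hring : star (x * star x * x - x) * (x * star x * x - x)
        = (star x * x) * ((star x * x) - 1)^2 := by
      simp only [star_sub, star_mul, star_star]
      noncomm_ring
    have hcfc1 : cfc (fun t : ℝ => t*(t-1)^2) (star x * x)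
        = star (x * star x * x - x) * (x * star x * x - x) := by
      rw [hring]
      have h := cfc_polynomial (Polynomial.X*(Polynomial.X-1)^2 : Polynomial ℝ) (star x * x) ha
      simpa using h
    have hspec : ∀ t ∈ spectrum ℝ (star x * x), t < 1/4 ∨ 2/3 < t := by
      intro t ht
      refine spielberg_dich hδ0 hδ4 ?_
      have hb := norm_apply_le_norm_cfc (fun t : ℝ => t*(t-1)^2) (star x * x) ht (by fun_prop) ha
      rw [hcfc1, CStarRing.norm_star_mul_self, Real.norm_eq_abs] at hb
      calc |t * (t-1)^2| ≤ ‖x * star x * x - x‖ * ‖x * star x * x - x‖ := hb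
        _ = ‖x * star x * x - x‖^2 := by ring
    have hFc : ContinuousOn spielbergF (spectrum ℝ (star x * x)) :=
      fun t ht => (spielberg_contF (hspec t ht)).continuousWithinAt
    have hHc : ContinuousOn spielbergH (spectrum ℝ (star x * x)) :=
      fun t ht => (spielberg_contH (hspec t ht)).continuousWithinAt
    have s1 : cfc (fun t : ℝ => spielbergF t - 1) (star x * x)
        = cfc spielbergF (star x * x) - 1 := by
      rw [cfc_sub spielbergF (fun _ => 1) (star x * x) hFc continuousOn_const,
        cfc_const_one ℝ (star x * x)]
    have s2 : cfc (fun t : ℝ => spielbergF t - 1) (star x * x)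
        = cfc (fun t : ℝ => (t - 1) * spielbergH t) (star x * x) :=
      cfc_congr (fun t ht => spielberg_keyId (hspec t ht))
    have s3 : cfc (fun t : ℝ => (t - 1) * spielbergH t) (star x * x)
        = cfc (fun t : ℝ => t - 1) (star x * x) * cfc spielbergH (star x * x) :=
      cfc_mul (fun t : ℝ => t - 1) spielbergH (star x * x) (by fun_prop) hHc
    have s4 : cfc (fun t : ℝ => t - 1) (star x * x) = (star x * x) - 1 := by
      rw [cfc_sub (fun t : ℝ => t) (fun _ => 1) (star x * x) (by fun_prop) continuousOn_const,
        cfc_id' ℝ (star x * x), cfc_const_one ℝ (star x * x)]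
    have e1 : cfc spielbergF (star x * x) - 1
        = ((star x * x) - 1) * cfc spielbergH (star x * x) := by
      rw [← s1, s2, s3, s4]
    have hkey : x * cfc spielbergF (star x * x) - x
        = (x * star x * x - x) * cfc spielbergH (star x * x) := by
      have : x * cfc spielbergF (star x * x) - x
          = x * (cfc spielbergF (star x * x) - 1) := by
        rw [mul_sub, mul_one]
      rw [this, e1, ← mul_assoc, mul_sub, mul_one, ← mul_assoc]
    have hamem : star x * x ∈ StarAlgebra.elemental ℂ x :=
      mul_mem (star_mem (StarAlgebra.elemental.self_mem ℂ x))
        (StarAlgebra.elemental.self_mem ℂ x)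
    have hcmem : cfc spielbergH (star x * x) ∈ StarAlgebra.elemental ℂ x :=
      StarAlgebra.elemental.le_of_mem (StarAlgebra.elemental.isClosed ℂ x) hamem
        (cfc_real_mem_elemental _ _ ha)
    constructor
    · apply subset_closure
      have heq : (⟨x * cfc spielbergF (star x * x), hy⟩ - ⟨x, hx⟩ : StarAlgebra.elemental ℂ x)
          = ⟨x * star x * x - x, hd⟩ * ⟨cfc spielbergH (star x * x), hcmem⟩ := by
        ext
        push_cast
        exact hkey
      rw [heq]
      exact TwoSidedIdeal.mul_mem_right _ _ _
        (TwoSidedIdeal.subset_span (Set.mem_singleton _))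
    · have hH2 : ‖cfc spielbergH (star x * x)‖ ≤ 2 :=
        norm_cfc_le (by norm_num) (fun t ht => by
          rw [Real.norm_eq_abs]; exact spielberg_boundH (hspec t ht))
      rw [hkey]
      calc ‖(x * star x * x - x) * cfc spielbergH (star x * x)‖
          ≤ ‖x * star x * x - x‖ * ‖cfc spielbergH (star x * x)‖ := norm_mul_le _ _
        _ ≤ ‖x * star x * x - x‖ * 2 := mul_le_mul_of_nonneg_left hH2 hδ0
        _ = 2 * ‖x * star x * x - x‖ := mul_comm _ _
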